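/- arXiv:2603.24156 — 2 statements merged into one kernel-verified Lean document; each statement's English description precedes it below -/
import Mathlib

section
/- Let E = ℝ^d with the Euclidean inner product, let g : E → ℝ be differentiable with L-Lipschitz gradient ∇g (L > 0), let f : E → ℝ, let F : E × E → ℝ be a tangent majorant of f, let 0 < τ < 1/L, and set h = f + g and H(x, x̃) = F(x, x̃) + g(x̃) + ⟨x − x̃, ∇g(x̃)⟩ + (1/(2τ))‖x − x̃‖². Then for every x̃ ∈ E and every global minimizer x' of z ↦ H(z, x̃), one has the sufficient decrease inequality h(x') ≤ h(x̃) − (1/(2τ) − L/2)·‖x' − x̃‖². -/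
open scoped RealInnerProductSpace

lemma descent_lemma {d : ℕ} (g : EuclideanSpace ℝ (Fin d) → ℝ) (L : ℝ) (hL : 0 ≤ L)
    (hg : Differentiable ℝ g)
    (hlip : ∀ a b : EuclideanSpace ℝ (Fin d),
      ‖gradient g a - gradient g b‖ ≤ L * ‖a - b‖)
    (xt v : EuclideanSpace ℝ (Fin d)) :
    g (xt + v) ≤ g xt + ⟪v, gradient g xt⟫ + L / 2 * ‖v‖ ^ 2 := by
  set c : ℝ → EuclideanSpace ℝ (Fin d) := fun t => xt + t • v with hc
  have hderiv : ∀ t : ℝ, HasDerivAt (fun t => g (c t)) ⟪gradient g (c t), v⟫ t := by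
    intro t
    have hct : HasDerivAt c v t := by
      have h := ((hasDerivAt_id t).smul_const v).const_add xt
      rw [one_smul] at h
      exact h
    have hft := ((hg (c t)).hasGradientAt).hasFDerivAt
    have h := hft.comp_hasDerivAt t hct
    exact h
  have hcontg : Continuous (gradient g) := by
    rcases eq_or_lt_of_le hL with h | h
    · have heq : ∀ x, gradient g x = gradient g xt := by
        intro x
        have := hlip x xt
        rw [← h, zero_mul] at this
        have := le_antisymm this (norm_nonneg _)
        rwa [norm_eq_zero, sub_eq_zero] at this
      exact continuous_const.congr fun x => (heq x).symm
    · exact (LipschitzWith.of_dist_le_mul (K := ⟨L, hL⟩) fun a b => by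
        rw [dist_eq_norm, dist_eq_norm]; exact hlip a b).continuous
  have hcont : Continuous fun t => ⟪gradient g (c t), v⟫ :=
    continuous_inner.comp ((hcontg.comp (by continuity)).prodMk continuous_const)
  have hint : g (xt + v) - g xt = ∫ t in (0:ℝ)..1, ⟪gradient g (c t), v⟫ := by
    have h2 := intervalIntegral.integral_eq_sub_of_hasDerivAt
      (f := fun t => g (c t)) (f' := fun t => ⟪gradient g (c t), v⟫)
      (fun t _ => hderiv t) (hcont.intervalIntegrable 0 1)
    simp only [hc, one_smul, zero_smul, add_zero] at h2
    exact h2.symm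
  have hbound : ∀ t ∈ Set.Icc (0:ℝ) 1,
      ⟪gradient g (c t), v⟫ ≤ ⟪gradient g xt, v⟫ + L * t * ‖v‖ ^ 2 := by
    intro t ht
    have h1 : ⟪gradient g (c t) - gradient g xt, v⟫ ≤ L * t * ‖v‖ ^ 2 := by
      calc ⟪gradient g (c t) - gradient g xt, v⟫ ≤ ‖gradient g (c t) - gradient g xt‖ * ‖v‖ :=
            real_inner_le_norm _ _
        _ ≤ (L * ‖c t - xt‖) * ‖v‖ := by
            have := hlip (c t) xt
            exact mul_le_mul_of_nonneg_right this (norm_nonneg _)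
        _ = L * t * ‖v‖ ^ 2 := by
            have hn : ‖c t - xt‖ = t * ‖v‖ := by
              simp [hc, norm_smul, abs_of_nonneg ht.1]
            rw [hn]; ring
    have h2 := inner_sub_left (𝕜 := ℝ) (gradient g (c t)) (gradient g xt) v
    rw [h2] at h1
    linarith
  have hcont2 : Continuous fun t : ℝ => ⟪gradient g xt, v⟫ + L * t * ‖v‖ ^ 2 :=
    continuous_const.add ((continuous_const.mul continuous_id).mul continuous_const)
  have hintle : (∫ t in (0:ℝ)..1, ⟪gradient g (c t), v⟫)
      ≤ ∫ t in (0:ℝ)..1, (⟪gradient g xt, v⟫ + L * t * ‖v‖ ^ 2) :=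
    intervalIntegral.integral_mono_on (by norm_num) (hcont.intervalIntegrable 0 1)
      (hcont2.intervalIntegrable 0 1) hbound
  have hval : (∫ t in (0:ℝ)..1, (⟪gradient g xt, v⟫ + L * t * ‖v‖ ^ 2))
      = ⟪gradient g xt, v⟫ + L / 2 * ‖v‖ ^ 2 := by
    have hI2 : IntervalIntegrable (fun t : ℝ => L * t * ‖v‖ ^ 2) MeasureTheory.volume 0 1 :=
      Continuous.intervalIntegrable (by fun_prop) 0 1
    rw [intervalIntegral.integral_add (intervalIntegrable_const) hI2]
    have : (∫ t in (0:ℝ)..1, L * t * ‖v‖ ^ 2) = L / 2 * ‖v‖ ^ 2 := by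
      have : (fun t : ℝ => L * t * ‖v‖ ^ 2) = fun t : ℝ => (L * ‖v‖ ^ 2) * t := by
        funext t; ring
      rw [this, intervalIntegral.integral_const_mul, integral_id]
      norm_num
      ring
    rw [this]
    simp
  rw [hval] at hintle
  rw [← hint] at hintle
  have hsymm : ⟪gradient g xt, v⟫ = ⟪v, gradient g xt⟫ := real_inner_comm _ _
  rw [hsymm] at hintle
  linarith

/-- Sufficient decrease: any global minimizer `x'` of `z ↦ H (z, xt)` satisfies
`h x' ≤ h xt - (1/(2τ) - L/2) ‖x' - xt‖²`. -/
theorem majorized_fb_sufficient_decrease {d : ℕ}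
    (g f : EuclideanSpace ℝ (Fin d) → ℝ)
    (F : EuclideanSpace ℝ (Fin d) × EuclideanSpace ℝ (Fin d) → ℝ)
    (L τ : ℝ) (hL : 0 < L)
    (hg : Differentiable ℝ g)
    (hlip : ∀ a b : EuclideanSpace ℝ (Fin d),
      ‖gradient g a - gradient g b‖ ≤ L * ‖a - b‖)
    (hmaj : ∀ x xt : EuclideanSpace ℝ (Fin d), f x ≤ F (x, xt))
    (hdiag : ∀ x : EuclideanSpace ℝ (Fin d), F (x, x) = f x)
    (hτ0 : 0 < τ) (hτ : τ < 1 / L)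
    (xt x' : EuclideanSpace ℝ (Fin d))
    (hmin : ∀ z : EuclideanSpace ℝ (Fin d),
      F (x', xt) + g xt + ⟪x' - xt, gradient g xt⟫ + (1 / (2 * τ)) * ‖x' - xt‖ ^ 2
        ≤ F (z, xt) + g xt + ⟪z - xt, gradient g xt⟫ + (1 / (2 * τ)) * ‖z - xt‖ ^ 2) :
    f x' + g x' ≤ f xt + g xt - (1 / (2 * τ) - L / 2) * ‖x' - xt‖ ^ 2 := by
  have h1 : F (x', xt) + ⟪x' - xt, gradient g xt⟫ + (1 / (2 * τ)) * ‖x' - xt‖ ^ 2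
      ≤ f xt := by
    have := hmin xt
    simp only [sub_self, inner_zero_left, norm_zero, hdiag, ne_eq, OfNat.ofNat_ne_zero,
      not_false_eq_true, zero_pow, mul_zero, add_zero] at this
    linarith
  have h2 := descent_lemma g L hL.le hg hlip xt (x' - xt)
  rw [add_sub_cancel] at h2
  have h3 := hmaj x' xt
  nlinarith [sq_nonneg ‖x' - xt‖]
end

section
/- Let A be an m × n real matrix with A_{ij} ≥ 0 for all i, j, let y ∈ ℝ^m with y_i ≥ 0 for all i, and let x̃ ∈ ℝ^n with x̃_j > 0 for all j and (Ax̃)_i > 0 for all i; set α̃_{ij} = A_{ij} x̃_j / (Ax̃)_i, s_j = Σ_{i=1}^m A_{ij}, and c_j = Σ_{i=1}^m y_i · α̃_{ij}. Assume s_j > 0 and c_j > 0 for all j, and let τ > 0 and u ∈ ℝ^n. Define x̂ ∈ ℝ^n componentwise by x̂_k = (1/2)·[u_k − τ s_k + sqrt((u_k − τ s_k)² + 4τ c_k)]. Then x̂_k > 0 for all k, and x̂ is the unique global minimizer over the open positive orthant {x : x_j > 0 for all j} of Q(x) = F_EM(x, x̃) + (1/(2τ))‖x − u‖², where F_EM(x,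 x̃) = Σ_{i=1}^m [(Ax)_i − Σ_{j=1}^n y_i · α̃_{ij} · log(A_{ij} x_j / α̃_{ij})]: for every x in the open positive orthant with x ≠ x̂, Q(x̂) < Q(x). In other words, the proximal operator of τ F_EM(·, x̃) at u is given in closed form by x̂. -/
open scoped BigOperators

/-- The EM surrogate
`F_EM (x, xt) = Σ_i [(Ax)_i − Σ_j y_i α̃_ij log (A_ij x_j / α̃_ij)]` with
`α̃_ij = A_ij xt_j / (A xt)_i` (conventions `log 0 = 0`, division by zero is zero). -/
noncomputable def emSurrogate {m n : ℕ} (A : Matrix (Fin m) (Fin n) ℝ)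
    (y : Fin m → ℝ) (x xt : Fin n → ℝ) : ℝ :=
  ∑ i, (A.mulVec x i -
    ∑ j, y i * (A i j * xt j / A.mulVec xt i) *
      Real.log (A i j * x j / (A i j * xt j / A.mulVec xt i)))

private lemma em_decomp {m n : ℕ} (A : Matrix (Fin m) (Fin n) ℝ)
    (y : Fin m → ℝ) (hA : ∀ i j, 0 ≤ A i j)
    (xt : Fin n → ℝ) (hxt : ∀ j, 0 < xt j) (hAxt : ∀ i, 0 < A.mulVec xt i)
    (x : Fin n → ℝ) (hx : ∀ j, 0 < x j) :
    emSurrogate A y x xt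
      = (∑ j, ((∑ i, A i j) * x j
          - (∑ i, y i * (A i j * xt j / A.mulVec xt i)) * Real.log (x j)))
        - ∑ i, ∑ j, y i * (A i j * xt j / A.mulVec xt i) *
            Real.log (A i j / (A i j * xt j / A.mulVec xt i)) := by
  have hterm : ∀ i j, y i * (A i j * xt j / A.mulVec xt i) *
      Real.log (A i j * x j / (A i j * xt j / A.mulVec xt i))
      = y i * (A i j * xt j / A.mulVec xt i) * Real.log (x j)
        + y i * (A i j * xt j / A.mulVec xt i) *
          Real.log (A i j / (A i j * xt j / A.mulVec xt i)) := by
    intro i j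
    rcases eq_or_lt_of_le (hA i j) with h | h
    · simp [← h]
    · have hα : 0 < A i j * xt j / A.mulVec xt i :=
        div_pos (mul_pos h (hxt j)) (hAxt i)
      have hrw : A i j * x j / (A i j * xt j / A.mulVec xt i)
          = x j * (A i j / (A i j * xt j / A.mulVec xt i)) := by ring
      rw [hrw, Real.log_mul (hx j).ne' (div_pos h hα).ne', mul_add]
  have h1 : ∑ i, A.mulVec x i = ∑ j, (∑ i, A i j) * x j := by
    simp only [Matrix.mulVec, dotProduct, Finset.sum_mul]
    exact Finset.sum_comm
  have h2 : ∑ i, ∑ j, y i * (A i j * xt j / A.mulVec xt i) * Real.log (x j)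
      = ∑ j, (∑ i, y i * (A i j * xt j / A.mulVec xt i)) * Real.log (x j) := by
    simp only [Finset.sum_mul]
    exact Finset.sum_comm
  simp only [emSurrogate, hterm, Finset.sum_add_distrib, Finset.sum_sub_distrib, h1, h2,
    Finset.sum_sub_distrib]
  ring

private lemma key1d_lt (s c τ u t t0 : ℝ) (hc : 0 < c) (hτ : 0 < τ)
    (ht : 0 < t) (ht0 : 0 < t0) (hne : t ≠ t0)
    (hroot : t0 ^ 2 - (u - τ * s) * t0 - τ * c = 0) :
    s * t0 - c * Real.log t0 + 1 / (2 * τ) * (t0 - u) ^ 2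
      < s * t - c * Real.log t + 1 / (2 * τ) * (t - u) ^ 2 := by
  have hdiv1 : t / t0 ≠ 1 := by
    simpa [div_eq_one_iff_eq ht0.ne'] using hne
  have hlog : Real.log (t / t0) < t / t0 - 1 :=
    Real.log_lt_sub_one_of_pos (div_pos ht ht0) hdiv1
  rw [Real.log_div ht.ne' ht0.ne'] at hlog
  have hlog2 : c * t0 * (Real.log t - Real.log t0) < c * (t - t0) := by
    calc c * t0 * (Real.log t - Real.log t0)
        < c * t0 * (t / t0 - 1) := by
          exact mul_lt_mul_of_pos_left hlog (mul_pos hc ht0)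
      _ = c * (t - t0) := by field_simp
  have hlog3 : 2 * τ * (c * t0 * (Real.log t - Real.log t0)) < 2 * τ * (c * (t - t0)) :=
    mul_lt_mul_of_pos_left hlog2 (by linarith)
  have hz : 2 * (t - t0) * (t0 ^ 2 - (u - τ * s) * t0 - τ * c) = 0 := by
    rw [hroot]; ring
  have hid : 2 * τ * t0 * (s * t) + t0 * (t - u) ^ 2
      - (2 * τ * t0 * (s * t0) + t0 * (t0 - u) ^ 2) - 2 * τ * (c * (t - t0))
      = t0 * (t - t0) ^ 2 + 2 * (t - t0) * (t0 ^ 2 - (u - τ * s) * t0 - τ * c) := by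
    ring
  have hpos2 : 0 < t0 * (t - t0) ^ 2 :=
    mul_pos ht0 (pow_two_pos_of_ne_zero (sub_ne_zero.mpr hne))
  have hmain : 2 * τ * t0 * (s * t0 - c * Real.log t0) + t0 * (t0 - u) ^ 2
      < 2 * τ * t0 * (s * t - c * Real.log t) + t0 * (t - u) ^ 2 := by
    nlinarith [hid, hz, hlog3, hpos2]
  have h2τt0 : (0:ℝ) < 2 * τ * t0 := by positivity
  rw [← mul_lt_mul_iff_right₀ h2τt0]
  have e : ∀ v w : ℝ, 2 * τ * t0 * (v + 1 / (2 * τ) * w) = 2 * τ * t0 * v + t0 * w := by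
    intro v w; field_simp
  rw [e, e]; exact hmain

/-- Closed form of the proximal operator of `τ F_EM (·, xt)` at `u`: with
`s_j = Σ_i A_ij`, `c_j = Σ_i y_i α̃_ij` and
`x̂_k = (1/2)[u_k − τ s_k + √((u_k − τ s_k)² + 4τ c_k)]`, the point `x̂` has
positive entries and is the unique global minimizer over the open positive
orthant of `Q x = F_EM (x, xt) + (1/(2τ)) ‖x − u‖²`. -/
theorem em_prox_closed_form {m n : ℕ} (A : Matrix (Fin m) (Fin n) ℝ)
    (y : Fin m → ℝ) (hA : ∀ i j, 0 ≤ A i j) (hy : ∀ i, 0 ≤ y i)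
    (xt : Fin n → ℝ) (hxt : ∀ j, 0 < xt j) (hAxt : ∀ i, 0 < A.mulVec xt i)
    (hs : ∀ j, 0 < ∑ i, A i j)
    (hc : ∀ j, 0 < ∑ i, y i * (A i j * xt j / A.mulVec xt i))
    (τ : ℝ) (hτ : 0 < τ) (u : Fin n → ℝ)
    (xhat : Fin n → ℝ)
    (hxhat : ∀ k, xhat k =
      (1 / 2) * (u k - τ * (∑ i, A i k) +
        Real.sqrt ((u k - τ * (∑ i, A i k)) ^ 2 +
          4 * τ * ∑ i, y i * (A i k * xt k / A.mulVec xt i)))) :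
    (∀ k, 0 < xhat k) ∧
    (∀ x : Fin n → ℝ, (∀ j, 0 < x j) → x ≠ xhat →
      emSurrogate A y xhat xt + (1 / (2 * τ)) * ∑ k, (xhat k - u k) ^ 2
        < emSurrogate A y x xt + (1 / (2 * τ)) * ∑ k, (x k - u k) ^ 2) := by
  have h4nn : ∀ k, (0:ℝ) ≤ (u k - τ * (∑ i, A i k)) ^ 2 +
      4 * τ * ∑ i, y i * (A i k * xt k / A.mulVec xt i) := by
    intro k
    have := hc k
    nlinarith [sq_nonneg (u k - τ * (∑ i, A i k))]
  have hpos : ∀ k, 0 < xhat k := by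
    intro k
    rw [hxhat k]
    have h4 : (0:ℝ) < 4 * τ * ∑ i, y i * (A i k * xt k / A.mulVec xt i) := by
      have := hc k; nlinarith
    have h1 : Real.sqrt ((u k - τ * (∑ i, A i k)) ^ 2)
        < Real.sqrt ((u k - τ * (∑ i, A i k)) ^ 2 +
            4 * τ * ∑ i, y i * (A i k * xt k / A.mulVec xt i)) :=
      Real.sqrt_lt_sqrt (sq_nonneg _) (by linarith)
    rw [Real.sqrt_sq_eq_abs] at h1
    have h2 := neg_abs_le (u k - τ * (∑ i, A i k))
    linarith
  have hroot : ∀ k, (xhat k) ^ 2 - (u k - τ * (∑ i, A i k)) * xhat k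
      - τ * (∑ i, y i * (A i k * xt k / A.mulVec xt i)) = 0 := by
    intro k
    have hr2 := Real.sq_sqrt (h4nn k)
    rw [hxhat k]
    linear_combination (1/4) * hr2
  refine ⟨hpos, fun x hx hne => ?_⟩
  rw [em_decomp A y hA xt hxt hAxt x hx, em_decomp A y hA xt hxt hAxt xhat hpos]
  have hsum : (∑ j, ((∑ i, A i j) * xhat j
        - (∑ i, y i * (A i j * xt j / A.mulVec xt i)) * Real.log (xhat j)
        + 1 / (2 * τ) * (xhat j - u j) ^ 2))
      < ∑ j, ((∑ i, A i j) * x j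
        - (∑ i, y i * (A i j * xt j / A.mulVec xt i)) * Real.log (x j)
        + 1 / (2 * τ) * (x j - u j) ^ 2) := by
    obtain ⟨j0, hj0⟩ := Function.ne_iff.mp hne
    refine Finset.sum_lt_sum (fun j _ => ?_) ⟨j0, Finset.mem_univ _, ?_⟩
    · rcases eq_or_ne (x j) (xhat j) with h | h
      · rw [h]
      · exact (key1d_lt _ _ τ (u j) (x j) (xhat j) (hc j) hτ (hx j) (hpos j) h
          (hroot j)).le
    · exact key1d_lt _ _ τ (u j0) (x j0) (xhat j0) (hc j0) hτ (hx j0) (hpos j0) hj0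
        (hroot j0)
  have e1 : ∀ z : Fin n → ℝ, (1 / (2 * τ)) * ∑ k, (z k - u k) ^ 2
      = ∑ k, 1 / (2 * τ) * (z k - u k) ^ 2 := fun z => Finset.mul_sum _ _ _
  rw [e1, e1]
  have := hsum
  simp only [Finset.sum_add_distrib, Finset.sum_sub_distrib] at this ⊢
  linarith
end
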